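/- Let (y_1,...,y_m) be a pairwise commuting m-tuple of self-adjoint elements of a unital C*-algebra X such that ∑_{k=1}^m y_k² is invertible. Then (y_1,...,y_m) is K-unessential for every K with 0 < K ≤ 1: for every rational δ > 0 there exist self-adjoint z_1,...,z_m with ‖y_k − z_k‖ ≤ δ for all k, ∑ z_k² invertible, and ‖(∑ z_k²)^{-1}‖ ≤ 1/δ². -/

import Mathlib

section Aux

variable {X : Type*} [CStarAlgebra X]

lemma commute_cfcHom_aux {a b : X} (ha : IsSelfAdjoint a)
    (hb : Commute b a) (f : C(spectrum ℝ a, ℝ)) : Commute b (cfcHom ha f) := by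
  induction f using ContinuousMap.induction_on_of_compact with
  | const r =>
      have h1 : (ContinuousMap.const (spectrum ℝ a) r) = algebraMap ℝ C(spectrum ℝ a, ℝ) r := rfl
      rw [h1, AlgHomClass.commutes]
      exact (Algebra.commutes r b).symm
  | id => rw [cfcHom_id ha]; exact hb
  | star_id =>
      rw [show star ((ContinuousMap.id ℝ).restrict (spectrum ℝ a))
          = (ContinuousMap.id ℝ).restrict (spectrum ℝ a) from star_trivial _, cfcHom_id ha]
      exact hb
  | add f g hf hg => rw [map_add]; exact hf.add_right hg
  | mul f g hf hg => rw [map_mul]; exact hf.mul_right hg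
  | frequently f hf =>
      have hclosed : IsClosed {g : C(spectrum ℝ a, ℝ) | Commute b (cfcHom ha g)} := by
        simp only [Commute, SemiconjBy]
        exact isClosed_eq ((continuous_mul_left b).comp (cfcHom_continuous ha))
          ((continuous_mul_right b).comp (cfcHom_continuous ha))
      exact hclosed.closure_subset (mem_closure_iff_frequently.mpr hf)

lemma commute_cfc_aux {a b : X} (ha : IsSelfAdjoint a) (hb : Commute b a) (f : ℝ → ℝ) :
    Commute b (cfc f a) := by
  by_cases hf : ContinuousOn f (spectrum ℝ a)
  · rw [cfc_apply f a ha hf]; exact commute_cfcHom_aux ha hb _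
  · rw [cfc_apply_of_not_continuousOn a hf]; exact Commute.zero_right b

end Aux

theorem stmt_7 {X : Type*} [CStarAlgebra X] (m : ℕ) (y : Fin m → X)
    (hy : ∀ k, IsSelfAdjoint (y k)) (hcomm : ∀ k l, Commute (y k) (y l))
    (hinv : IsUnit (∑ k, (y k) ^ 2)) (K : ℝ) (hK0 : 0 < K) (hK1 : K ≤ 1) :
    ∀ δ : ℚ, 0 < δ → ∃ z : Fin m → X,
      (∀ k, IsSelfAdjoint (z k)) ∧ (∀ k, ‖y k - z k‖ ≤ (δ : ℝ)) ∧
      ∃ b : X, (∑ k, (z k) ^ 2) * b = 1 ∧ b * (∑ k, (z k) ^ 2) = 1 ∧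
        ‖b‖ ≤ 1 / (K * (δ : ℝ) ^ 2) := by
  letI := CStarAlgebra.spectralOrder X
  haveI := CStarAlgebra.spectralOrderedRing X
  rcases subsingleton_or_nontrivial X with hX | hX
  · intro δ hδ
    have hδ' : (0:ℝ) < (δ:ℝ) := by exact_mod_cast hδ
    refine ⟨y, hy, fun k => ?_, 1, Subsingleton.elim _ _, Subsingleton.elim _ _, ?_⟩
    · simpa using hδ'.le
    · rw [show (1:X) = 0 from Subsingleton.elim _ _, norm_zero]
      positivity
  intro δ hδ
  have hδ' : (0:ℝ) < (δ:ℝ) := by exact_mod_cast hδ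
  set t : ℝ := (δ:ℝ)^2 with ht_def
  have ht : 0 < t := by positivity
  set a : X := ∑ k, (y k) ^ 2 with ha_def
  have hy2 : ∀ k, (0:X) ≤ y k ^ 2 := fun k => by
    have h := star_mul_self_nonneg (y k)
    rwa [(hy k).star_eq, ← sq] at h
  have ha : IsSelfAdjoint a := by
    rw [ha_def, IsSelfAdjoint, star_sum]
    exact Finset.sum_congr rfl fun k _ => ((hy k).pow 2).star_eq
  have ha0 : 0 ≤ a := Finset.sum_nonneg fun k _ => hy2 k
  have hspec : ∀ s ∈ spectrum ℝ a, 0 < s := by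
    intro s hs
    rcases (spectrum_nonneg_of_nonneg ha0 hs).lt_or_eq with h | h
    · exact h
    · exact absurd (h ▸ hs) ((spectrum.zero_notMem_iff ℝ).mpr hinv)
  -- the functions
  set f : ℝ → ℝ := fun s => Real.sqrt (s + t) * (Real.sqrt s)⁻¹ with hf_def
  set g1 : ℝ → ℝ := fun s => (Real.sqrt s)⁻¹ with hg1_def
  set g2 : ℝ → ℝ := fun s => Real.sqrt s - Real.sqrt (s + t) with hg2_def
  have hsqrt_ne : ∀ s ∈ spectrum ℝ a, Real.sqrt s ≠ 0 := fun s hs =>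
    (Real.sqrt_ne_zero'.mpr (hspec s hs))
  have hcg1 : ContinuousOn g1 (spectrum ℝ a) :=
    (Real.continuous_sqrt.continuousOn).inv₀ hsqrt_ne
  have hcst : Continuous fun s : ℝ => Real.sqrt (s + t) :=
    Real.continuous_sqrt.comp (continuous_id.add continuous_const)
  have hcf : ContinuousOn f (spectrum ℝ a) := hcst.continuousOn.mul hcg1
  have hcg2 : ContinuousOn g2 (spectrum ℝ a) :=
    (Real.continuous_sqrt.continuousOn).sub hcst.continuousOn
  -- commutation
  have hcomm_a : ∀ k, Commute (y k) a := fun k =>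
    Commute.sum_right _ _ _ fun l _ => (hcomm k l).pow_right 2
  have hcy : ∀ k (g : ℝ → ℝ), Commute (y k) (cfc g a) := fun k g =>
    commute_cfc_aux ha (hcomm_a k) g
  have hsa : ∀ g : ℝ → ℝ, IsSelfAdjoint (cfc g a) := fun g => cfc_predicate g a
  set z : Fin m → X := fun k => y k * cfc f a with hz_def
  have hz_sa : ∀ k, IsSelfAdjoint (z k) := by
    intro k
    rw [hz_def, IsSelfAdjoint, star_mul, (hsa f).star_eq, (hy k).star_eq]
    exact ((hcy k f).symm).eq
  -- sum of squares
  have hff : ContinuousOn (fun s => f s * f s) (spectrum ℝ a) := hcf.mul hcf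
  have hsum : ∑ k, (z k)^2 = cfc (fun s => s + t) a := by
    have h1 : ∀ k, (z k)^2 = y k ^ 2 * (cfc f a)^2 := fun k => (hcy k f).mul_pow 2
    calc ∑ k, (z k)^2 = (∑ k, y k ^ 2) * (cfc f a)^2 := by
          rw [Finset.sum_congr rfl fun k _ => h1 k, Finset.sum_mul]
      _ = a * cfc (fun s => f s * f s) a := by
          rw [← ha_def, sq, ← cfc_mul f f a hcf hcf]
      _ = cfc (fun s => s * (f s * f s)) a := by
          nth_rewrite 1 [← cfc_id ℝ a]
          rw [← cfc_mul _ _ a continuousOn_id hff]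
          rfl
      _ = cfc (fun s => s + t) a := by
          apply cfc_congr
          intro s hs
          have hs0 : 0 < s := hspec s hs
          have h2 : Real.sqrt s * Real.sqrt s = s := Real.mul_self_sqrt hs0.le
          have h3 : Real.sqrt (s + t) * Real.sqrt (s + t) = s + t :=
            Real.mul_self_sqrt (by positivity)
          have h4 : Real.sqrt s ≠ 0 := Real.sqrt_ne_zero'.mpr hs0
          simp only [hf_def]
          field_simp
          rw [Real.sq_sqrt (by linarith), Real.sq_sqrt hs0.le]; ring

  -- the inverse
  set b : X := cfc (fun s => (s + t)⁻¹) a with hb_def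
  have hcinv : ContinuousOn (fun s : ℝ => (s + t)⁻¹) (spectrum ℝ a) :=
    (continuous_id.add continuous_const).continuousOn.inv₀
      fun s hs => by have := hspec s hs; exact (by linarith : (0:ℝ) < s + t).ne'
  have hcadd : ContinuousOn (fun s : ℝ => s + t) (spectrum ℝ a) :=
    (continuous_id.add continuous_const).continuousOn
  have hmul1 : cfc (fun s => s + t) a * b = 1 := by
    rw [hb_def, ← cfc_mul _ _ a hcadd hcinv]
    calc cfc (fun s => (s + t) * (s + t)⁻¹) a = cfc (1 : ℝ → ℝ) a := by
          apply cfc_congr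
          intro s hs
          have hs0 : 0 < s := hspec s hs
          have : s + t ≠ 0 := by positivity
          simp [this]
      _ = 1 := cfc_one ℝ a
  have hmul2 : b * cfc (fun s => s + t) a = 1 := by
    rw [hb_def, (cfc_commute_cfc _ _ a).eq, ← hb_def, hmul1]
  -- the norm of b
  have hnormb : ‖b‖ ≤ 1 / (K * (δ:ℝ)^2) := by
    apply norm_cfc_le (by positivity)
    intro s hs
    have hs0 : 0 < s := hspec s hs
    rw [Real.norm_eq_abs, abs_of_pos (by positivity)]
    rw [one_div]
    apply inv_anti₀ (by positivity)
    nlinarith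
  -- the norm estimate for ‖y k * cfc g1 a‖
  have hyle : ∀ k, y k ^ 2 ≤ a := by
    intro k
    have h0 : (0:X) ≤ ∑ l ∈ Finset.univ.erase k, y l ^ 2 :=
      Finset.sum_nonneg fun l _ => hy2 l
    have h1 : y k ^ 2 + ∑ l ∈ Finset.univ.erase k, y l ^ 2 = a := by
      rw [ha_def]
      exact Finset.add_sum_erase Finset.univ (fun l => y l ^ 2) (Finset.mem_univ k)
    calc y k ^ 2 ≤ y k ^ 2 + ∑ l ∈ Finset.univ.erase k, y l ^ 2 := le_add_of_nonneg_right h0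
      _ = a := h1
  have hg1a : cfc g1 a * a * cfc g1 a = 1 := by
    nth_rewrite 2 [← cfc_id ℝ a]
    rw [← cfc_mul _ _ a hcg1 continuousOn_id,
        ← cfc_mul (fun x => g1 x * id x) _ a (hcg1.mul continuousOn_id) hcg1]
    rw [show (1:X) = cfc (1 : ℝ → ℝ) a from (cfc_one ℝ a).symm]
    apply cfc_congr
    intro s hs
    have hs0 : 0 < s := hspec s hs
    have h2 : Real.sqrt s * Real.sqrt s = s := Real.mul_self_sqrt hs0.le
    have h4 : Real.sqrt s ≠ 0 := Real.sqrt_ne_zero'.mpr hs0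
    simp only [hg1_def, id_eq, Pi.one_apply]
    field_simp
    rw [Real.sq_sqrt hs0.le]
  have hw : ∀ k, ‖y k * cfc g1 a‖ ≤ 1 := by
    intro k
    set w : X := y k * cfc g1 a with hw_def
    have hw_sa : IsSelfAdjoint w := by
      rw [hw_def, IsSelfAdjoint, star_mul, (hsa g1).star_eq, (hy k).star_eq]
      exact ((hcy k g1).symm).eq
    have heq : w * w = cfc g1 a * y k ^ 2 * cfc g1 a := by
      have h := (hcy k g1).eq
      rw [hw_def, sq]
      nth_rewrite 1 [h]
      simp only [mul_assoc]
    have hle1 : w * w ≤ 1 := by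
      rw [heq, ← hg1a]
      have := star_left_conjugate_le_conjugate (hyle k) (cfc g1 a)
      rwa [(hsa g1).star_eq] at this
    have hnn : (0:X) ≤ w * w := by
      have h := star_mul_self_nonneg w
      rwa [hw_sa.star_eq] at h
    have hnorm : ‖w * w‖ ≤ 1 := by
      calc ‖w * w‖ ≤ ‖(1:X)‖ := CStarAlgebra.norm_le_norm_of_nonneg_of_le hnn hle1
        _ = 1 := norm_one
    have h5 : ‖w * w‖ = ‖w‖ * ‖w‖ := by
      nth_rewrite 1 [← hw_sa.star_eq]
      exact CStarRing.norm_star_mul_self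
    nlinarith [norm_nonneg w]
  -- distance estimate
  have hdist : ∀ k, ‖y k - z k‖ ≤ (δ:ℝ) := by
    intro k
    have hfact : y k - z k = (y k * cfc g1 a) * cfc g2 a := by
      rw [mul_assoc, ← cfc_mul _ _ a hcg1 hcg2]
      have h6 : cfc (fun s => g1 s * g2 s) a = cfc (fun s => (1:ℝ) - f s) a := by
        apply cfc_congr
        intro s hs
        have hs0 : 0 < s := hspec s hs
        have h4 : Real.sqrt s ≠ 0 := Real.sqrt_ne_zero'.mpr hs0
        simp only [hg1_def, hg2_def, hf_def]
        field_simp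
      rw [h6, cfc_sub _ _ a (continuousOn_const) hcf, cfc_const_one ℝ a]
      rw [hz_def, mul_sub, mul_one]
    rw [hfact]
    have hg2norm : ‖cfc g2 a‖ ≤ (δ:ℝ) := by
      apply norm_cfc_le hδ'.le
      intro s hs
      have hs0 : 0 < s := hspec s hs
      have h7 : Real.sqrt s ≤ Real.sqrt (s + t) := Real.sqrt_le_sqrt (by linarith)
      have h8 : Real.sqrt (s + t) ≤ Real.sqrt s + (δ:ℝ) := by
        rw [show (δ:ℝ) = Real.sqrt t from (Real.sqrt_sq hδ'.le).symm]
        have h9 : s + t ≤ (Real.sqrt s + Real.sqrt t)^2 := by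
          nlinarith [Real.mul_self_sqrt hs0.le, Real.mul_self_sqrt ht.le,
            Real.sqrt_nonneg s, Real.sqrt_nonneg t]
        calc Real.sqrt (s + t) ≤ Real.sqrt ((Real.sqrt s + Real.sqrt t)^2) :=
              Real.sqrt_le_sqrt h9
          _ = Real.sqrt s + Real.sqrt t := Real.sqrt_sq (by positivity)
      rw [Real.norm_eq_abs, hg2_def, abs_sub_comm, abs_of_nonneg (by linarith)]
      linarith
    calc ‖(y k * cfc g1 a) * cfc g2 a‖ ≤ ‖y k * cfc g1 a‖ * ‖cfc g2 a‖ := norm_mul_le _ _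
      _ ≤ 1 * (δ:ℝ) := mul_le_mul (hw k) hg2norm (norm_nonneg _) zero_le_one
      _ = (δ:ℝ) := one_mul _
  exact ⟨z, hz_sa, hdist, b, by rw [hsum]; exact hmul1, by rw [hsum]; exact hmul2, hnormb⟩
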